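/- Let U ⊆ ℝ³ be open, let q ∈ ℍ satisfy q² = −1, and let f, g : ℝ³ → ℍ be monogenic on U with f(x), g(x) ∈ ℝ·1 + ℝ·q for all x ∈ U. Then f(x)·g(x) = g(x)·f(x) for all x ∈ U, the pointwise product f·g is monogenic on U, and f·g takes values in ℝ·1 + ℝ·q on U. (This is the substance of the paper's proposition that the space 𝒜_B(U) of monogenic subsurface spinors is a commutative Banach algebra: it is closed under multiplication and multiplication is commutative.) -/

import Mathlib

noncomputable section

abbrev R3 : Type := EuclideanSpace ℝ (Fin 3)

abbrev Quat := Quaternion ℝ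

def e (m : Fin 3) : R3 := EuclideanSpace.single m 1

def qi : Quat := ⟨0, 1, 0, 0⟩
def qj : Quat := ⟨0, 0, 1, 0⟩
def qk : Quat := ⟨0, 0, 0, 1⟩

/-- `f` is monogenic on `U`. -/
def MonogenicOn (f : R3 → Quat) (U : Set R3) : Prop :=
  ∀ x ∈ U, DifferentiableAt ℝ f x ∧
    fderiv ℝ f x (e 0) + qk * fderiv ℝ f x (e 1) + qj * fderiv ℝ f x (e 2) = 0

open Classical in
/-- Extension of a continuous map on `K` by zero. -/
def extendK (K : Set R3) (f : C(K, Quat)) : R3 → Quat :=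
  fun x => if h : x ∈ K then f ⟨x, h⟩ else 0

/-- `f : C(K, Quat)` is monogenic on the interior of `K`. -/
def MonogenicOnInterior (K : Set R3) (f : C(K, Quat)) : Prop :=
  MonogenicOn (extendK K f) (interior K)

/-- `w` lies in the real plane `ℝ·1 + ℝ·q`. -/
def InPlane (q w : Quat) : Prop := ∃ a b : ℝ, w = a • 1 + b • q

/-- Plane-spinor fields on `K`. -/
def IsPlaneSpinor (K : Set R3) (f : C(K, Quat)) : Prop :=
  ∃ q : Quat, q ^ 2 = -1 ∧ (∀ x, InPlane q (f x)) ∧ MonogenicOnInterior K f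

/-- Spin characters of `K`. -/
structure IsSpinCharacter (K : Set R3) (δ : C(K, Quat) → Quat) : Prop where
  continuous : Continuous δ
  map_add : ∀ f g : C(K, Quat), δ (f + g) = δ f + δ g
  map_smul_right : ∀ (f : C(K, Quat)) (a : Quat), δ (f * ContinuousMap.const _ a) = δ f * a
  map_one : δ 1 = 1
  grade_real : ∀ f : C(K, Quat), (∀ x, ∃ a : ℝ, f x = (a : ℝ) • 1) → ∃ a : ℝ, δ f = (a : ℝ) • 1
  grade_imaginary : ∀ f : C(K, Quat), (∀ x, (f x).re = 0) → (δ f).re = 0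
  map_list_prod : ∀ L : List C(K, Quat), (∀ f ∈ L, IsPlaneSpinor K f) →
    δ L.prod = (L.map δ).prod

/-- The monogenic spinor fields 𝓜⁺(K): the closure in `C(K, Quat)` of restrictions of
functions monogenic on an open neighborhood of `K`. -/
def MonSpinorFields (K : Set R3) : Set C(K, Quat) :=
  closure { f : C(K, Quat) | ∃ U : Set R3, ∃ F : R3 → Quat,
    IsOpen U ∧ K ⊆ U ∧ MonogenicOn F U ∧ ∀ x : K, f x = F x }

/-- A compact region in ℝ³. -/
def IsCompactRegion (K : Set R3) : Prop :=
  K.Nonempty ∧ IsCompact K ∧ K = closure (interior K) ∧ IsConnected Kᶜ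





section AuxPlane

lemma aux_commute_of_inPlane {q w : Quat} (h : InPlane q w) : q * w = w * q := by
  obtain ⟨a, b, rfl⟩ := h
  simp only [mul_add, add_mul, mul_smul_comm, smul_mul_assoc, mul_one, one_mul]

lemma aux_inPlane_of_commute {q : Quat} (hq : q ^ 2 = -1) {w : Quat} (h : q * w = w * q) :
    InPlane q w := by
  have hq2 : q * q = -1 := by rw [← sq]; exact hq
  rw [Quaternion.ext_iff] at hq2 h
  simp only [Quaternion.re_mul, Quaternion.imI_mul, Quaternion.imJ_mul, Quaternion.imK_mul,
    Quaternion.re_neg, Quaternion.imI_neg, Quaternion.imJ_neg, Quaternion.imK_neg,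
    Quaternion.re_one, Quaternion.imI_one, Quaternion.imJ_one, Quaternion.imK_one] at hq2 h
  obtain ⟨e1, e2, e3, e4⟩ := hq2
  obtain ⟨f1, f2, f3, f4⟩ := h
  have hre : q.re = 0 := by
    nlinarith [sq_nonneg q.imI, sq_nonneg q.imJ, sq_nonneg q.imK, sq_nonneg q.re]
  rw [hre] at e1 f2 f3 f4
  refine ⟨w.re, q.imI * w.imI + q.imJ * w.imJ + q.imK * w.imK, ?_⟩
  rw [Quaternion.ext_iff]
  simp only [Quaternion.re_add, Quaternion.imI_add, Quaternion.imJ_add, Quaternion.imK_add,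
    Quaternion.re_smul, Quaternion.imI_smul, Quaternion.imJ_smul, Quaternion.imK_smul,
    Quaternion.re_one, Quaternion.imI_one, Quaternion.imJ_one, Quaternion.imK_one,
    smul_eq_mul]
  refine ⟨by simp [hre], ?_, ?_, ?_⟩
  · linear_combination w.imI * e1 - q.imJ/2 * f4 + q.imK/2 * f3
  · linear_combination w.imJ * e1 + q.imI/2 * f4 - q.imK/2 * f2
  · linear_combination w.imK * e1 - q.imI/2 * f3 + q.imJ/2 * f2

/-- If `g` maps `U` into the commutant of `q`, so do the values of its derivative. -/
lemma aux_fderiv_commute {U : Set R3} (hU : IsOpen U) {q : Quat} {g : R3 → Quat}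
    (hg : ∀ y ∈ U, DifferentiableAt ℝ g y) (hgq : ∀ y ∈ U, q * g y = g y * q)
    {x : R3} (hx : x ∈ U) (v : R3) :
    q * fderiv ℝ g x v = fderiv ℝ g x v * q := by
  set D := fderiv ℝ g x with hD
  have hd : HasFDerivAt g D x := (hg x hx).hasFDerivAt
  set A := (ContinuousLinearMap.mul ℝ Quat) q with hA
  set B := (ContinuousLinearMap.mul ℝ Quat).flip q with hB
  have hL : HasFDerivAt (fun y => q * g y) (A.comp D) x := by
    have := A.hasFDerivAt.comp x hd
    simpa [hA, Function.comp_def, ContinuousLinearMap.mul_apply'] using this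
  have hR : HasFDerivAt (fun y => g y * q) (B.comp D) x := by
    have := B.hasFDerivAt.comp x hd
    simpa [hB, Function.comp_def] using this
  have h1 : HasFDerivAt (fun y => q * g y - g y * q) (A.comp D - B.comp D) x := hL.sub hR
  have heq : (fun y => q * g y - g y * q) =ᶠ[nhds x] (fun _ => 0) := by
    filter_upwards [hU.mem_nhds hx] with y hy
    rw [hgq y hy, sub_self]
  have h2 : HasFDerivAt (fun y => q * g y - g y * q) 0 x :=
    HasFDerivAt.congr_of_eventuallyEq (f' := (0 : R3 →L[ℝ] Quat))
      (hasFDerivAt_const (0 : Quat) x) heq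
  have h3 : A.comp D - B.comp D = 0 := h1.unique h2
  have h4 := congrArg (fun L : R3 →L[ℝ] Quat => L v) h3
  simpa [hA, hB, ContinuousLinearMap.mul_apply', sub_eq_zero] using h4

set_option synthInstance.maxHeartbeats 1000000 in
/-- Product rule for quaternion-valued maps. -/
lemma aux_fderiv_mul (f g : R3 → Quat) (x : R3) (hfd : DifferentiableAt ℝ f x)
    (hgd : DifferentiableAt ℝ g x) (v : R3) :
    fderiv ℝ (fun y => f y * g y) x v = f x * fderiv ℝ g x v + fderiv ℝ f x v * g x := by
  have h := (hfd.hasFDerivAt.mul' hgd.hasFDerivAt).fderiv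
  rw [show (fun y => f y * g y) = f * g from rfl, h]
  simp [ContinuousLinearMap.smul_apply, smul_eq_mul]

/-- Algebraic core: the Dirac operator annihilates `f · g` pointwise. -/
lemma aux_core (q w0 w1 w2 K J : Quat) (a b : ℝ)
    (h0 : w0 + K * w1 + J * w2 = 0)
    (hc0 : q * w0 = w0 * q) (hc1 : q * w1 = w1 * q) (hc2 : q * w2 = w2 * q) :
    (a • 1 + b • q) * w0 + K * ((a • 1 + b • q) * w1) + J * ((a • 1 + b • q) * w2) = 0 := by
  have hkj : K * w1 + J * w2 = -w0 := by
    linear_combination (norm := noncomm_ring) h0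
  calc (a • 1 + b • q) * w0 + K * ((a • 1 + b • q) * w1) + J * ((a • 1 + b • q) * w2)
      = a • (w0 + K * w1 + J * w2) + b • (q * w0 + K * (q * w1) + J * (q * w2)) := by
        simp only [add_mul, smul_mul_assoc, one_mul, mul_add, mul_smul_comm, smul_add]
        module
    _ = b • (q * w0 + (K * w1 + J * w2) * q) := by
        rw [h0, hc1, hc2, smul_zero, zero_add, ← mul_assoc, ← mul_assoc, add_mul, add_assoc]
    _ = 0 := by rw [hkj, hc0]; simp

end AuxPlane

/-- Monogenic fields valued in a common plane `ℝ·1 + ℝ·q` commute, their product is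
monogenic, and the product again takes values in the plane. -/
theorem monogenic_plane_spinors_commutative_algebra (U : Set R3) (hU : IsOpen U)
    (q : Quat) (hq : q ^ 2 = -1) (f g : R3 → Quat)
    (hf : MonogenicOn f U) (hg : MonogenicOn g U)
    (hfq : ∀ x ∈ U, InPlane q (f x)) (hgq : ∀ x ∈ U, InPlane q (g x)) :
    (∀ x ∈ U, f x * g x = g x * f x) ∧
    MonogenicOn (fun x => f x * g x) U ∧
    (∀ x ∈ U, InPlane q (f x * g x)) := by
  have hqq : q * q = -1 := by rw [← sq]; exact hq
  refine ⟨?_, ?_, ?_⟩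
  · intro x hx
    obtain ⟨a, b, hfx⟩ := hfq x hx
    obtain ⟨c, d, hgx⟩ := hgq x hx
    rw [hfx, hgx]
    simp only [add_mul, mul_add, smul_mul_assoc, mul_smul_comm, one_mul, mul_one]
    module
  · intro x hx
    obtain ⟨hfd, hfD⟩ := hf x hx
    obtain ⟨hgd, hgD⟩ := hg x hx
    refine ⟨hfd.mul hgd, ?_⟩
    simp only [aux_fderiv_mul f g x hfd hgd]
    obtain ⟨a, b, hfx⟩ := hfq x hx
    have hcomm : ∀ v : R3, q * fderiv ℝ g x v = fderiv ℝ g x v * q :=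
      aux_fderiv_commute hU (fun y hy => (hg y hy).1)
        (fun y hy => aux_commute_of_inPlane (hgq y hy)) hx
    have hcore : f x * fderiv ℝ g x (e 0) + qk * (f x * fderiv ℝ g x (e 1)) +
        qj * (f x * fderiv ℝ g x (e 2)) = 0 := by
      rw [hfx]
      exact aux_core q _ _ _ qk qj a b hgD (hcomm (e 0)) (hcomm (e 1)) (hcomm (e 2))
    have hright : (fderiv ℝ f x (e 0) + qk * fderiv ℝ f x (e 1) +
        qj * fderiv ℝ f x (e 2)) * g x = 0 := by rw [hfD, zero_mul]
    calc f x * fderiv ℝ g x (e 0) + fderiv ℝ f x (e 0) * g x +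
          qk * (f x * fderiv ℝ g x (e 1) + fderiv ℝ f x (e 1) * g x) +
          qj * (f x * fderiv ℝ g x (e 2) + fderiv ℝ f x (e 2) * g x)
        = (f x * fderiv ℝ g x (e 0) + qk * (f x * fderiv ℝ g x (e 1)) +
            qj * (f x * fderiv ℝ g x (e 2))) +
          (fderiv ℝ f x (e 0) + qk * fderiv ℝ f x (e 1) +
            qj * fderiv ℝ f x (e 2)) * g x := by noncomm_ring
      _ = 0 := by rw [hcore, hright, add_zero]
  · intro x hx
    obtain ⟨a, b, hfx⟩ := hfq x hx
    obtain ⟨c, d, hgx⟩ := hgq x hx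
    refine ⟨a * c - b * d, a * d + b * c, ?_⟩
    rw [hfx, hgx]
    simp only [add_mul, mul_add, smul_mul_assoc, mul_smul_comm, one_mul, mul_one, hqq,
      smul_smul, smul_neg]
    module


end
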